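/- There is a universal constant β > 0 (one may take β = 1/40) such that the following holds. For all integers i ≥ 2 and k with 1 ≤ k ≤ 4^{i−2}, and every ζ ∈ ℤ² with ‖ζ‖₁ ≤ 2^i, setting r = ⌊2^i/√k⌋: the number of points u ∈ ℤ² with ‖u − ζ‖₁ ≤ r and ‖u‖₁ ≤ 2^i is at least (β/k)·|{u ∈ ℤ² : ‖u‖₁ ≤ 2^i}|. -/

import Mathlib

private noncomputable def ballF (m : ℕ) : Finset (ℤ × ℤ) :=
  (Finset.Icc (-(m:ℤ)) m).biUnion fun x =>
    (Finset.Icc (|x| - m) ((m:ℤ) - |x|)).image fun y => (x, y)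

private lemma mem_ballF (m : ℕ) (u : ℤ × ℤ) :
    u ∈ ballF m ↔ |u.1| + |u.2| ≤ (m : ℤ) := by
  simp only [ballF, Finset.mem_biUnion, Finset.mem_image, Finset.mem_Icc]
  constructor
  · rintro ⟨x, hx, y, ⟨hy1, hy2⟩, rfl⟩
    have h2 : |y| ≤ (m:ℤ) - |x| := abs_le.mpr ⟨by linarith, hy2⟩
    simpa using by linarith
  · intro h
    have h1 := abs_nonneg u.1
    have h2 := abs_nonneg u.2
    refine ⟨u.1, ⟨by linarith [neg_abs_le u.1], by linarith [le_abs_self u.1]⟩,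
      u.2, ⟨by linarith [neg_abs_le u.2], by linarith [le_abs_self u.2]⟩, rfl⟩

private lemma sum_aux (m : ℕ) :
    ∑ x ∈ Finset.Icc (-(m:ℤ)) m, (2*(m:ℤ) - 2*|x| + 1).toNat = 2*m^2 + 2*m + 1 := by
  induction m with
  | zero => simp
  | succ m ih =>
    have hdecomp : Finset.Icc (-((m+1:ℕ):ℤ)) ((m+1:ℕ):ℤ)
        = insert (-((m:ℤ)+1)) (insert ((m:ℤ)+1) (Finset.Icc (-(m:ℤ)) m)) := by
      ext x; simp only [Finset.mem_Icc, Finset.mem_insert]; push_cast; omega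
    rw [hdecomp, Finset.sum_insert (by simp only [Finset.mem_insert, Finset.mem_Icc]; omega),
      Finset.sum_insert (by simp only [Finset.mem_Icc]; omega)]
    have hcongr : ∀ x ∈ Finset.Icc (-(m:ℤ)) m,
        (2*((m+1:ℕ):ℤ) - 2*|x| + 1).toNat = (2*(m:ℤ) - 2*|x| + 1).toNat + 2 := by
      intro x hx
      rw [Finset.mem_Icc] at hx
      have h1 : |x| ≤ (m:ℤ) := abs_le.mpr hx
      have h2 := abs_nonneg x
      push_cast
      omega
    rw [Finset.sum_congr rfl hcongr, Finset.sum_add_distrib, ih, Finset.sum_const, Int.card_Icc]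
    have h1 : ((2:ℤ)*((m+1:ℕ):ℤ) - 2*|(-((m:ℤ)+1))| + 1).toNat = 1 := by
      rw [abs_neg, abs_of_nonneg (by positivity)]; push_cast; omega
    have h2 : ((2:ℤ)*((m+1:ℕ):ℤ) - 2*|((m:ℤ)+1)| + 1).toNat = 1 := by
      rw [abs_of_nonneg (by positivity)]; push_cast; omega
    have h3 : ((m:ℤ) + 1 - -(m:ℤ)).toNat = 2*m+1 := by omega
    rw [h1, h2, h3]; ring

private lemma card_ballF (m : ℕ) : (ballF m).card = 2*m^2 + 2*m + 1 := by
  rw [ballF, Finset.card_biUnion]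
  · refine Eq.trans (Finset.sum_congr rfl ?_) (sum_aux m)
    intro x hx
    rw [Finset.card_image_of_injective _ (fun a b h => by simpa using h), Int.card_Icc]
    congr 1; ring
  · intro x _ y _ hxy
    rw [Function.onFun, Finset.disjoint_left]
    rintro p hp hq
    rw [Finset.mem_image] at hp hq
    obtain ⟨b, _, rfl⟩ := hp
    obtain ⟨c, _, hc⟩ := hq
    exact hxy ((Prod.mk.injEq _ _ _ _ ▸ hc).1).symm

private lemma set_eq_ball (m : ℕ) :
    {u : ℤ × ℤ | |u.1| + |u.2| ≤ (m:ℤ)} = ↑(ballF m) := by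
  ext u; simp [mem_ballF]

private lemma ncard_ball (m : ℕ) :
    ({u : ℤ × ℤ | |u.1| + |u.2| ≤ (m:ℤ)}).ncard = 2*m^2 + 2*m + 1 := by
  rw [set_eq_ball, Set.ncard_coe_finset, card_ballF]

private lemma finite_ball (m : ℕ) : ({u : ℤ × ℤ | |u.1| + |u.2| ≤ (m:ℤ)}).Finite := by
  rw [set_eq_ball]; exact (ballF m).finite_toSet

private lemma center_exists (z1 z2 d : ℤ) (hd : 0 ≤ d) :
    ∃ w1 w2 : ℤ, |z1 - w1| + |z2 - w2| ≤ d ∧ |w1| + |w2| + d ≤ max (|z1| + |z2|) d := by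
  refine ⟨max 0 (z1 - d) + min 0 (z1 + d),
    max 0 (z2 - (max 0 (d - max z1 (-z1)))) + min 0 (z2 + (max 0 (d - max z1 (-z1)))), ?_, ?_⟩ <;>
  · simp only [Int.abs_eq_natAbs] at *
    omega

set_option maxHeartbeats 1600000 in
/-- Probability estimate at the heart of Theorem 3.1: there is a universal constant
`β > 0` (one may take `β = 1/40`) such that for all `i ≥ 2`, `1 ≤ k ≤ 4^(i−2)`, and
`ζ ∈ ℤ²` with `‖ζ‖₁ ≤ 2^i`, setting `r = ⌊2^i/√k⌋`, the number of lattice points `u`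
with `‖u − ζ‖₁ ≤ r` and `‖u‖₁ ≤ 2^i` is at least `(β/k)·|{u : ‖u‖₁ ≤ 2^i}|`. -/
theorem large_phase_success :
    ∃ β : ℝ, 0 < β ∧ β = 1 / 40 ∧
      ∀ (i k : ℕ), 2 ≤ i → 1 ≤ k → k ≤ 4 ^ (i - 2) →
        ∀ ζ : ℤ × ℤ, |ζ.1| + |ζ.2| ≤ (2 : ℤ) ^ i →
          (β / k) * (Set.ncard {u : ℤ × ℤ | |u.1| + |u.2| ≤ (2 : ℤ) ^ i} : ℝ) ≤
            (Set.ncard {u : ℤ × ℤ |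
                |u.1 - ζ.1| + |u.2 - ζ.2| ≤ (⌊(2 : ℝ) ^ i / Real.sqrt k⌋₊ : ℤ) ∧
                |u.1| + |u.2| ≤ (2 : ℤ) ^ i} : ℝ) := by
  refine ⟨1/40, by norm_num, rfl, ?_⟩
  intro i k hi hk1 hk2 ζ hζ
  set n : ℕ := 2 ^ i with hn
  have hnR : (2:ℝ)^i = (n:ℝ) := by push_cast [hn]; ring
  have hnZ : (2:ℤ)^i = (n:ℤ) := by push_cast [hn]; ring
  rw [hnZ] at hζ ⊢
  set r : ℕ := ⌊(2:ℝ)^i / Real.sqrt k⌋₊ with hrdef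
  have hk0 : (0:ℝ) < k := by exact_mod_cast hk1
  have hs0 : 0 < Real.sqrt k := Real.sqrt_pos.mpr hk0
  have hsq : Real.sqrt k * Real.sqrt k = (k:ℝ) := Real.mul_self_sqrt hk0.le
  have hn4 : (4:ℕ) ≤ n := by
    calc (4:ℕ) = 2^2 := rfl
    _ ≤ 2^i := Nat.pow_le_pow_right (by norm_num) hi
  have h1sqrt : (1:ℝ) ≤ Real.sqrt k := by
    rw [show (1:ℝ) = Real.sqrt 1 by simp]
    exact Real.sqrt_le_sqrt (by exact_mod_cast hk1)
  have hsqrtle : Real.sqrt k ≤ (n:ℝ)/4 := by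
    have h1 : (k:ℝ) ≤ (4:ℝ)^(i-2) := by exact_mod_cast hk2
    have hpow : ((2:ℝ)^(i-2))^2 = (4:ℝ)^(i-2) := by
      rw [← pow_mul, mul_comm, pow_mul]; norm_num
    have hn2 : (n:ℝ)/4 = (2:ℝ)^(i-2) := by
      rw [← hnR, show i = (i-2)+2 by omega, pow_add]; norm_num
    calc Real.sqrt k ≤ Real.sqrt (((2:ℝ)^(i-2))^2) := Real.sqrt_le_sqrt (by rw [hpow]; exact h1)
    _ = (2:ℝ)^(i-2) := Real.sqrt_sq (by positivity)
    _ = (n:ℝ)/4 := hn2.symm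
  set x : ℝ := (2:ℝ)^i / Real.sqrt k with hxdef
  have hx4 : (4:ℝ) ≤ x := by
    rw [hxdef, le_div_iff₀ hs0, hnR]; linarith
  have hxn : x ≤ (n:ℝ) := by
    rw [hxdef, hnR]; exact div_le_self (by positivity) h1sqrt
  have hr4 : 4 ≤ r := Nat.le_floor (by
    calc ((4:ℕ):ℝ) = 4 := by norm_num
    _ ≤ x := hx4)
  have hrn : r ≤ n := by
    rw [hrdef]
    calc ⌊x⌋₊ ≤ ⌊(n:ℝ)⌋₊ := Nat.floor_le_floor hxn
    _ = n := Nat.floor_natCast n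
  have hrx : x - 1 < (r:ℝ) := Nat.sub_one_lt_floor x
  set s : ℕ := r / 2 with hs
  set d : ℕ := r - s with hd
  have h2s : x - 2 ≤ 2*(s:ℝ) := by
    have h0 : r ≤ 2*s + 1 := by omega
    have h1 : (r:ℝ) ≤ 2*(s:ℝ) + 1 := by exact_mod_cast h0
    linarith
  -- geometry: find a shifted center w
  obtain ⟨w1, w2, hwc, hwn⟩ := center_exists ζ.1 ζ.2 (d:ℤ) (by positivity)
  have hsdZ : (s:ℤ) + (d:ℤ) = (r:ℤ) := by
    have : s + d = r := by omega
    exact_mod_cast this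
  have hdsZ : (s:ℤ) ≤ (d:ℤ) := by
    have : s ≤ d := by omega
    exact_mod_cast this
  have hdnZ : (d:ℤ) ≤ (n:ℤ) := by
    have : d ≤ n := by omega
    exact_mod_cast this
  have hwn' : |w1| + |w2| ≤ (n:ℤ) - (d:ℤ) := by
    have hmax : max (|ζ.1| + |ζ.2|) (d:ℤ) ≤ (n:ℤ) := max_le hζ hdnZ
    linarith
  have hsub : (fun v : ℤ × ℤ => (v.1 + w1, v.2 + w2)) '' {u : ℤ × ℤ | |u.1| + |u.2| ≤ (s:ℤ)}
      ⊆ {u : ℤ × ℤ | |u.1 - ζ.1| + |u.2 - ζ.2| ≤ ((r:ℕ):ℤ) ∧ |u.1| + |u.2| ≤ (n:ℤ)} := by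
    rintro p ⟨v, hv, rfl⟩
    simp only [Set.mem_setOf_eq] at hv ⊢
    constructor
    · have t1 : |v.1 + w1 - ζ.1| ≤ |v.1| + |ζ.1 - w1| := by
        rw [show v.1 + w1 - ζ.1 = v.1 + (w1 - ζ.1) by ring, abs_sub_comm ζ.1 w1]
        exact abs_add_le _ _
      have t2 : |v.2 + w2 - ζ.2| ≤ |v.2| + |ζ.2 - w2| := by
        rw [show v.2 + w2 - ζ.2 = v.2 + (w2 - ζ.2) by ring, abs_sub_comm ζ.2 w2]
        exact abs_add_le _ _
      linarith
    · have t1 : |v.1 + w1| ≤ |v.1| + |w1| := abs_add_le _ _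
      have t2 : |v.2 + w2| ≤ |v.2| + |w2| := abs_add_le _ _
      linarith
  have hinj : Function.Injective (fun v : ℤ × ℤ => (v.1 + w1, v.2 + w2)) := by
    intro a b h
    have h1 : a.1 + w1 = b.1 + w1 := congrArg Prod.fst h
    have h2 : a.2 + w2 = b.2 + w2 := congrArg Prod.snd h
    exact Prod.ext_iff.mpr ⟨by omega, by omega⟩
  have hfin : ({u : ℤ × ℤ | |u.1 - ζ.1| + |u.2 - ζ.2| ≤ ((r:ℕ):ℤ)
      ∧ |u.1| + |u.2| ≤ (n:ℤ)}).Finite :=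
    (finite_ball n).subset (fun u hu => hu.2)
  have hcard1 : ((fun v : ℤ × ℤ => (v.1 + w1, v.2 + w2)) ''
      {u : ℤ × ℤ | |u.1| + |u.2| ≤ (s:ℤ)}).ncard = 2*s^2 + 2*s + 1 := by
    rw [Set.ncard_image_of_injective _ hinj, ncard_ball]
  have hcard2 : 2*s^2 + 2*s + 1 ≤
      ({u : ℤ × ℤ | |u.1 - ζ.1| + |u.2 - ζ.2| ≤ ((r:ℕ):ℤ)
        ∧ |u.1| + |u.2| ≤ (n:ℤ)}).ncard :=
    hcard1 ▸ Set.ncard_le_ncard hsub hfin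
  -- numeric core
  have hxk : x * Real.sqrt k = (n:ℝ) := by
    rw [hxdef, div_mul_cancel₀ _ hs0.ne', hnR]
  have e3 : (k:ℝ) * x^2 = (n:ℝ)^2 := by
    calc (k:ℝ) * x^2 = x^2 * (Real.sqrt k)^2 := by rw [Real.sq_sqrt hk0.le]; ring
    _ = (x*Real.sqrt k)^2 := by ring
    _ = (n:ℝ)^2 := by rw [hxk]
  have hn4R : (4:ℝ) ≤ (n:ℝ) := by exact_mod_cast hn4
  have hs0' : (0:ℝ) ≤ (s:ℝ) := by positivity
  have e1 : (x-2)^2 ≤ (2*(s:ℝ))^2 := by nlinarith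
  have e2 : x^2 ≤ 4*(x-2)^2 := by nlinarith [sq_nonneg (x-4)]
  have key : (1/40 / (k:ℝ)) * (2*(n:ℝ)^2+2*(n:ℝ)+1) ≤ 2*(s:ℝ)^2+2*(s:ℝ)+1 := by
    rw [div_mul_eq_mul_div, div_le_iff₀ hk0]
    have f1 : (k:ℝ)*(x-2)^2 ≤ (k:ℝ)*(2*(s:ℝ))^2 := mul_le_mul_of_nonneg_left e1 hk0.le
    have f2 : (k:ℝ)*x^2 ≤ (k:ℝ)*(4*(x-2)^2) := mul_le_mul_of_nonneg_left e2 hk0.le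
    have f4 : (0:ℝ) ≤ (k:ℝ)*(2*(s:ℝ)+1) := by positivity
    nlinarith [sq_nonneg ((n:ℝ)-1)]
  rw [ncard_ball n]
  calc (1/40 / (k:ℝ)) * ((2*n^2+2*n+1 : ℕ):ℝ)
      = (1/40 / (k:ℝ)) * (2*(n:ℝ)^2+2*(n:ℝ)+1) := by push_cast; ring
    _ ≤ 2*(s:ℝ)^2+2*(s:ℝ)+1 := key
    _ = ((2*s^2+2*s+1 : ℕ):ℝ) := by push_cast; ring
    _ ≤ _ := by exact_mod_cast hcard2
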